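/- For r > 0 and σ ∈ {1, −1} define v_{r,σ} : ℝ → ℝ by v_{r,σ}(x) = ∫_0^x sinh(r)/(cosh(r) − σ·cos y) dy. Let n ≥ 1, let K ≥ 3 and L ≥ 1 be natural numbers, let r_1,…,r_K > 0, s_1,…,s_L > 0 and σ_1,…,σ_K, τ_1,…,τ_L ∈ {1,−1}. Then there exists a unique ξ = (ξ_1,…,ξ_n) ∈ ℝ^n satisfying, for every j ∈ {1,…,n}, the system Σ_{k=1}^K v_{r_k,σ_k}(ξ_j) + Σ_{j′≠j} Σ_{l=1}^L ( v_{s_l,τ_l}(ξ_{j′} + ξ_j) − v_{s_l,τ_l}(ξ_{j′} − ξ_j) ) = 2π(n+1−j). Moreover this solution satisfies π(n+1−j)/κ₋ ≤ ξ_j ≤ π(n+1−j)/κ₊ for all 1 ≤ j ≤ n, and π(j′−j)/κ₋ ≤ ξ_j − ξ_{j′} ≤ π(j′−j)/κ₊ for all 1 ≤ j < j′ ≤ n, where κ₋ = (1/2) Σ_{k=1}^K coth(r_k/2) + (n−1) Σ_{l=1}^L coth(s_l/2) and κ₊ = (1/2) Σ_{k=1}^K tanh(r_k/2) + (n−1)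 Σ_{l=1}^L tanh(s_l/2). -/

import Mathlib

open Real Finset

noncomputable def vTrig (r σ x : ℝ) : ℝ :=
  ∫ y in (0:ℝ)..x, Real.sinh r / (Real.cosh r - σ * Real.cos y)

/-- The trigonometric type B Bethe critical-point system at `α = 0`, `ε = 0`, `μ = ρ`. -/
def trigBSys (n K L : ℕ) (r : Fin K → ℝ) (σ : Fin K → ℝ)
    (s : Fin L → ℝ) (τ : Fin L → ℝ) (ξ : Fin n → ℝ) : Prop :=
  ∀ j : Fin n,
    (∑ k, vTrig (r k) (σ k) (ξ j)) +
    (∑ j' ∈ Finset.univ.erase j, ∑ l,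
      (vTrig (s l) (τ l) (ξ j' + ξ j) - vTrig (s l) (τ l) (ξ j' - ξ j)))
    = 2 * π * ((n : ℝ) - j.val)


noncomputable def vInt (r σ y : ℝ) : ℝ := Real.sinh r / (Real.cosh r - σ * Real.cos y)


lemma vInt_denom_pos {r σ : ℝ} (hr : 0 < r) (hσ : σ = 1 ∨ σ = -1) (y : ℝ) :
    0 < Real.cosh r - σ * Real.cos y := by
  have h1 : 1 < Real.cosh r := Real.one_lt_cosh.2 (ne_of_gt hr)
  have h2 : σ * Real.cos y ≤ 1 := by
    rcases hσ with h | h <;> subst h <;>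
      [skip; rw [neg_one_mul]] <;>
      nlinarith [Real.cos_le_one y, Real.neg_one_le_cos y]
  linarith

lemma vInt_continuous {r σ : ℝ} (hr : 0 < r) (hσ : σ = 1 ∨ σ = -1) :
    Continuous (vInt r σ) := by
  apply Continuous.div continuous_const
  · continuity
  · exact fun y => ne_of_gt (vInt_denom_pos hr hσ y)

lemma tanh_half_pos {r : ℝ} (hr : 0 < r) : 0 < Real.tanh (r / 2) := by
  rw [Real.tanh_eq_sinh_div_cosh]
  exact div_pos (Real.sinh_pos_iff.2 (by linarith)) (Real.cosh_pos (r/2))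

lemma tanh_half_eq (r : ℝ) : Real.tanh (r / 2) = Real.sinh r / (Real.cosh r + 1) := by
  have hadd := Real.sinh_add (r/2) (r/2)
  have hcadd := Real.cosh_add (r/2) (r/2)
  rw [show r/2 + r/2 = r by ring] at hadd hcadd
  have h1 : Real.sinh r = 2 * Real.sinh (r/2) * Real.cosh (r/2) := by rw [hadd]; ring
  have h2 : Real.cosh r + 1 = 2 * Real.cosh (r/2) ^ 2 := by
    have := Real.cosh_sq_sub_sinh_sq (r/2); nlinarith
  have hc : Real.cosh (r/2) ≠ 0 := ne_of_gt (Real.cosh_pos (r/2))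
  rw [Real.tanh_eq_sinh_div_cosh, h1, h2]
  field_simp

lemma coth_half_eq {r : ℝ} (hr : 0 < r) :
    (Real.tanh (r / 2))⁻¹ = Real.sinh r / (Real.cosh r - 1) := by
  have hadd := Real.sinh_add (r/2) (r/2)
  have hcadd := Real.cosh_add (r/2) (r/2)
  rw [show r/2 + r/2 = r by ring] at hadd hcadd
  have h1 : Real.sinh r = 2 * Real.sinh (r/2) * Real.cosh (r/2) := by rw [hadd]; ring
  have h2 : Real.cosh r - 1 = 2 * Real.sinh (r/2) ^ 2 := by
    have := Real.cosh_sq_sub_sinh_sq (r/2); nlinarith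
  have hs : Real.sinh (r/2) ≠ 0 := ne_of_gt (Real.sinh_pos_iff.2 (by linarith))
  have hc : Real.cosh (r/2) ≠ 0 := ne_of_gt (Real.cosh_pos (r/2))
  rw [Real.tanh_eq_sinh_div_cosh, h1, h2]
  field_simp

lemma vInt_bounds {r σ : ℝ} (hr : 0 < r) (hσ : σ = 1 ∨ σ = -1) (y : ℝ) :
    Real.tanh (r / 2) ≤ vInt r σ y ∧ vInt r σ y ≤ (Real.tanh (r / 2))⁻¹ := by
  have hd := vInt_denom_pos hr hσ y
  have hsinh : 0 < Real.sinh r := Real.sinh_pos_iff.2 hr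
  have hcos1 : σ * Real.cos y ≤ 1 := by
    rcases hσ with h | h <;> subst h <;> nlinarith [Real.cos_le_one y, Real.neg_one_le_cos y]
  have hcos2 : -1 ≤ σ * Real.cos y := by
    rcases hσ with h | h <;> subst h <;> nlinarith [Real.cos_le_one y, Real.neg_one_le_cos y]
  have h1 : Real.cosh r - 1 ≤ Real.cosh r - σ * Real.cos y := by linarith
  have h2 : Real.cosh r - σ * Real.cos y ≤ Real.cosh r + 1 := by linarith
  have hc1 : 0 < Real.cosh r - 1 := by
    have := Real.one_lt_cosh.2 (ne_of_gt hr); linarith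
  constructor
  · rw [tanh_half_eq]
    exact div_le_div_of_nonneg_left hsinh.le hd h2
  · rw [coth_half_eq hr]
    exact div_le_div_of_nonneg_left hsinh.le hc1 h1


lemma vTrig_eq_int (r σ x : ℝ) : vTrig r σ x = ∫ y in (0:ℝ)..x, vInt r σ y := rfl

lemma hasDerivAt_vTrig {r σ : ℝ} (hr : 0 < r) (hσ : σ = 1 ∨ σ = -1) (x : ℝ) :
    HasDerivAt (vTrig r σ) (vInt r σ x) x := by
  have hc := vInt_continuous hr hσ
  exact (intervalIntegral.integral_hasStrictDerivAt_right
    (hc.intervalIntegrable 0 x) (hc.stronglyMeasurableAtFilter _ _)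
    hc.continuousAt).hasDerivAt

lemma continuous_vTrig {r σ : ℝ} (hr : 0 < r) (hσ : σ = 1 ∨ σ = -1) :
    Continuous (vTrig r σ) :=
  continuous_iff_continuousAt.2 fun x => (hasDerivAt_vTrig hr hσ x).continuousAt

lemma vTrig_zero (r σ : ℝ) : vTrig r σ 0 = 0 := intervalIntegral.integral_same

lemma vTrig_neg (r σ x : ℝ) : vTrig r σ (-x) = - vTrig r σ x := by
  have h := intervalIntegral.integral_comp_neg (a := (0:ℝ)) (b := x) (vInt r σ)
  have heq : ∀ y : ℝ, vInt r σ (-y) = vInt r σ y := by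
    intro y; simp [vInt, Real.cos_neg]
  simp only [heq, neg_zero] at h
  have h2 := intervalIntegral.integral_symm (f := vInt r σ) (μ := MeasureTheory.volume) 0 (-x)
  rw [vTrig_eq_int, vTrig_eq_int]
  linarith

lemma vTrig_incr {r σ : ℝ} (hr : 0 < r) (hσ : σ = 1 ∨ σ = -1) {x y : ℝ} (hxy : x ≤ y) :
    Real.tanh (r/2) * (y - x) ≤ vTrig r σ y - vTrig r σ x ∧
    vTrig r σ y - vTrig r σ x ≤ (Real.tanh (r/2))⁻¹ * (y - x) := by
  have hc := vInt_continuous hr hσ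
  have hsub : vTrig r σ y - vTrig r σ x = ∫ u in x..y, vInt r σ u := by
    rw [vTrig_eq_int, vTrig_eq_int]
    exact intervalIntegral.integral_interval_sub_left
      (hc.intervalIntegrable 0 y) (hc.intervalIntegrable 0 x)
  constructor
  · rw [hsub]
    have := intervalIntegral.integral_mono_on (μ := MeasureTheory.volume) (f := fun _ => Real.tanh (r/2))
      (g := vInt r σ) hxy (intervalIntegrable_const) (hc.intervalIntegrable x y)
      (fun u _ => (vInt_bounds hr hσ u).1)
    rwa [intervalIntegral.integral_const, smul_eq_mul, mul_comm] at this
  · rw [hsub]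
    have := intervalIntegral.integral_mono_on (μ := MeasureTheory.volume) (f := vInt r σ)
      (g := fun _ => (Real.tanh (r/2))⁻¹) hxy (hc.intervalIntegrable x y)
      (intervalIntegrable_const) (fun u _ => (vInt_bounds hr hσ u).2)
    rwa [intervalIntegral.integral_const, smul_eq_mul, mul_comm] at this

lemma vTrig_mono {r σ : ℝ} (hr : 0 < r) (hσ : σ = 1 ∨ σ = -1) : Monotone (vTrig r σ) := by
  intro x y hxy
  have h := (vTrig_incr hr hσ hxy).1
  nlinarith [tanh_half_pos hr, sub_nonneg.2 hxy, mul_nonneg (tanh_half_pos hr).le (sub_nonneg.2 hxy)]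

noncomputable def trigF (n K L : ℕ) (r σ : Fin K → ℝ) (s τ : Fin L → ℝ)
    (ξ : Fin n → ℝ) (j : Fin n) : ℝ :=
  (∑ k, vTrig (r k) (σ k) (ξ j)) +
    (∑ j' ∈ Finset.univ.erase j, ∑ l,
      (vTrig (s l) (τ l) (ξ j' + ξ j) - vTrig (s l) (τ l) (ξ j' - ξ j)))

section system

variable {n K L : ℕ} {r σ : Fin K → ℝ} {s τ : Fin L → ℝ}

lemma card_erase_real (j : Fin n) : (((univ : Finset (Fin n)).erase j).card : ℝ) = (n : ℝ) - 1 := by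
  rw [Finset.card_erase_of_mem (Finset.mem_univ j), Finset.card_univ, Fintype.card_fin]
  rw [Nat.cast_sub j.pos]
  simp

lemma trigF_update (ξ : Fin n → ℝ) (j : Fin n) (z : ℝ) :
    trigF n K L r σ s τ (Function.update ξ j z) j
      = (∑ k, vTrig (r k) (σ k) z)
        + ∑ i ∈ univ.erase j, ∑ l,
            (vTrig (s l) (τ l) (ξ i + z) - vTrig (s l) (τ l) (ξ i - z)) := by
  unfold trigF
  rw [Function.update_self]
  congr 1
  refine Finset.sum_congr rfl fun i hi => ?_
  rw [Function.update_of_ne (Finset.ne_of_mem_erase hi)]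

/-- Increment of `trigF` when only coordinate `j` moves. -/
lemma trigF_coord_incr (hr : ∀ k, 0 < r k) (hs : ∀ l, 0 < s l)
    (hσ : ∀ k, σ k = 1 ∨ σ k = -1) (hτ : ∀ l, τ l = 1 ∨ τ l = -1)
    (ξ : Fin n → ℝ) (j : Fin n) {x y : ℝ} (hxy : x ≤ y) :
    ((∑ k, Real.tanh (r k / 2)) + 2 * ((n:ℝ)-1) * (∑ l, Real.tanh (s l / 2))) * (y - x)
      ≤ trigF n K L r σ s τ (Function.update ξ j y) j
        - trigF n K L r σ s τ (Function.update ξ j x) j ∧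
    trigF n K L r σ s τ (Function.update ξ j y) j
        - trigF n K L r σ s τ (Function.update ξ j x) j
      ≤ ((∑ k, (Real.tanh (r k / 2))⁻¹) + 2 * ((n:ℝ)-1) * (∑ l, (Real.tanh (s l / 2))⁻¹)) * (y - x) := by
  rw [trigF_update, trigF_update]
  have key : ∀ i : Fin n, ∀ l : Fin L,
      Real.tanh (s l / 2) * (2 * (y - x)) ≤
        (vTrig (s l) (τ l) (ξ i + y) - vTrig (s l) (τ l) (ξ i - y))
        - (vTrig (s l) (τ l) (ξ i + x) - vTrig (s l) (τ l) (ξ i - x)) ∧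
      (vTrig (s l) (τ l) (ξ i + y) - vTrig (s l) (τ l) (ξ i - y))
        - (vTrig (s l) (τ l) (ξ i + x) - vTrig (s l) (τ l) (ξ i - x))
      ≤ (Real.tanh (s l / 2))⁻¹ * (2 * (y - x)) := by
    intro i l
    have h1 := vTrig_incr (hs l) (hτ l) (x := ξ i + x) (y := ξ i + y) (by linarith)
    have h2 := vTrig_incr (hs l) (hτ l) (x := ξ i - y) (y := ξ i - x) (by linarith)
    constructor <;> [nlinarith [h1.1, h2.1]; nlinarith [h1.2, h2.2]]
  have hK1 : ∀ k, Real.tanh (r k / 2) * (y - x) ≤ vTrig (r k) (σ k) y - vTrig (r k) (σ k) x :=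
    fun k => (vTrig_incr (hr k) (hσ k) hxy).1
  have hK2 : ∀ k, vTrig (r k) (σ k) y - vTrig (r k) (σ k) x ≤ (Real.tanh (r k / 2))⁻¹ * (y - x) :=
    fun k => (vTrig_incr (hr k) (hσ k) hxy).2
  have hcard := card_erase_real j
  have hsubA : (∑ k, (vTrig (r k) (σ k) y - vTrig (r k) (σ k) x))
      = (∑ k, vTrig (r k) (σ k) y) - ∑ k, vTrig (r k) (σ k) x := Finset.sum_sub_distrib _ _
  have hsubB : (∑ i ∈ univ.erase j, ∑ l,
        ((vTrig (s l) (τ l) (ξ i + y) - vTrig (s l) (τ l) (ξ i - y))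
          - (vTrig (s l) (τ l) (ξ i + x) - vTrig (s l) (τ l) (ξ i - x))))
      = (∑ i ∈ univ.erase j, ∑ l, (vTrig (s l) (τ l) (ξ i + y) - vTrig (s l) (τ l) (ξ i - y)))
        - ∑ i ∈ univ.erase j, ∑ l, (vTrig (s l) (τ l) (ξ i + x) - vTrig (s l) (τ l) (ξ i - x)) := by
    rw [← Finset.sum_sub_distrib]
    exact Finset.sum_congr rfl fun i _ => Finset.sum_sub_distrib _ _
  constructor
  · have hA : (∑ k, Real.tanh (r k / 2)) * (y - x)
        ≤ ∑ k, (vTrig (r k) (σ k) y - vTrig (r k) (σ k) x) := by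
      rw [Finset.sum_mul]; exact Finset.sum_le_sum fun k _ => hK1 k
    have hB : ((univ.erase j).card : ℝ) * ((∑ l, Real.tanh (s l / 2)) * (2 * (y - x)))
        ≤ ∑ i ∈ univ.erase j, ∑ l,
            ((vTrig (s l) (τ l) (ξ i + y) - vTrig (s l) (τ l) (ξ i - y))
              - (vTrig (s l) (τ l) (ξ i + x) - vTrig (s l) (τ l) (ξ i - x))) := by
      rw [← nsmul_eq_mul, ← Finset.sum_const]
      refine Finset.sum_le_sum fun i _ => ?_
      rw [Finset.sum_mul]
      exact Finset.sum_le_sum fun l _ => (key i l).1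
    rw [hcard] at hB
    have he : ((∑ k, Real.tanh (r k / 2)) + 2 * ((n:ℝ)-1) * (∑ l, Real.tanh (s l / 2))) * (y - x)
        = (∑ k, Real.tanh (r k / 2)) * (y - x)
          + ((n:ℝ)-1) * ((∑ l, Real.tanh (s l / 2)) * (2 * (y - x))) := by ring
    linarith [hA, hB, hsubA, hsubB]
  · have hA : ∑ k, (vTrig (r k) (σ k) y - vTrig (r k) (σ k) x)
        ≤ (∑ k, (Real.tanh (r k / 2))⁻¹) * (y - x) := by
      rw [Finset.sum_mul]; exact Finset.sum_le_sum fun k _ => hK2 k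
    have hB : ∑ i ∈ univ.erase j, ∑ l,
            ((vTrig (s l) (τ l) (ξ i + y) - vTrig (s l) (τ l) (ξ i - y))
              - (vTrig (s l) (τ l) (ξ i + x) - vTrig (s l) (τ l) (ξ i - x)))
        ≤ ((univ.erase j).card : ℝ) * ((∑ l, (Real.tanh (s l / 2))⁻¹) * (2 * (y - x))) := by
      rw [← nsmul_eq_mul, ← Finset.sum_const]
      refine Finset.sum_le_sum fun i _ => ?_
      rw [Finset.sum_mul]
      exact Finset.sum_le_sum fun l _ => (key i l).2
    rw [hcard] at hB
    have he : ((∑ k, (Real.tanh (r k / 2))⁻¹) + 2 * ((n:ℝ)-1) * (∑ l, (Real.tanh (s l / 2))⁻¹)) * (y - x)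
        = (∑ k, (Real.tanh (r k / 2))⁻¹) * (y - x)
          + ((n:ℝ)-1) * ((∑ l, (Real.tanh (s l / 2))⁻¹) * (2 * (y - x))) := by ring
    linarith [hA, hB, hsubA, hsubB]

end system

section system2

variable {n K L : ℕ} {r σ : Fin K → ℝ} {s τ : Fin L → ℝ}

/-- Difference of `trigF` at two distinct indices, when `ξ j' ≤ ξ j`. -/
lemma trigF_pair (hr : ∀ k, 0 < r k) (hs : ∀ l, 0 < s l)
    (hσ : ∀ k, σ k = 1 ∨ σ k = -1) (hτ : ∀ l, τ l = 1 ∨ τ l = -1)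
    (ξ : Fin n → ℝ) {j j' : Fin n} (hjj' : j ≠ j') (hle : ξ j' ≤ ξ j) :
    ((∑ k, Real.tanh (r k / 2)) + 2 * ((n:ℝ)-1) * (∑ l, Real.tanh (s l / 2))) * (ξ j - ξ j')
      ≤ trigF n K L r σ s τ ξ j - trigF n K L r σ s τ ξ j' ∧
    trigF n K L r σ s τ ξ j - trigF n K L r σ s τ ξ j'
      ≤ ((∑ k, (Real.tanh (r k / 2))⁻¹) + 2 * ((n:ℝ)-1) * (∑ l, (Real.tanh (s l / 2))⁻¹)) * (ξ j - ξ j') := by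
  set a := ξ j with ha
  set b := ξ j' with hb
  have hj'mem : j' ∈ (univ : Finset (Fin n)).erase j :=
    Finset.mem_erase.2 ⟨Ne.symm hjj', Finset.mem_univ _⟩
  have hjmem : j ∈ (univ : Finset (Fin n)).erase j' :=
    Finset.mem_erase.2 ⟨hjj', Finset.mem_univ _⟩
  set E := ((univ : Finset (Fin n)).erase j).erase j' with hE
  have hE' : ((univ : Finset (Fin n)).erase j').erase j = E := Finset.erase_right_comm
  have hn2 : (2:ℕ) ≤ n := Fintype.one_lt_card_iff.2 ⟨j, j', hjj'⟩ |>.trans_eq (Fintype.card_fin n)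
  have hcardE : ((E.card : ℕ) : ℝ) = (n:ℝ) - 2 := by
    rw [hE, Finset.card_erase_of_mem hj'mem, Finset.card_erase_of_mem (Finset.mem_univ j),
      Finset.card_univ, Fintype.card_fin]
    rw [Nat.cast_sub (by omega : 1 ≤ n - 1), Nat.cast_sub (by omega : 1 ≤ n)]
    push_cast; ring
  have hd1 : trigF n K L r σ s τ ξ j
      = (∑ k, vTrig (r k) (σ k) a)
        + ((∑ l, (vTrig (s l) (τ l) (b + a) - vTrig (s l) (τ l) (b - a)))
          + ∑ i ∈ E, ∑ l, (vTrig (s l) (τ l) (ξ i + a) - vTrig (s l) (τ l) (ξ i - a))) := by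
    unfold trigF
    rw [← Finset.insert_erase hj'mem, Finset.sum_insert (Finset.notMem_erase j' _)]
  have hd2 : trigF n K L r σ s τ ξ j'
      = (∑ k, vTrig (r k) (σ k) b)
        + ((∑ l, (vTrig (s l) (τ l) (a + b) - vTrig (s l) (τ l) (a - b)))
          + ∑ i ∈ E, ∑ l, (vTrig (s l) (τ l) (ξ i + b) - vTrig (s l) (τ l) (ξ i - b))) := by
    unfold trigF
    rw [← Finset.insert_erase hjmem, Finset.sum_insert (Finset.notMem_erase j _), hE']
  -- per-term estimates
  have key : ∀ i : Fin n, ∀ l : Fin L,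
      Real.tanh (s l / 2) * (2 * (a - b)) ≤
        (vTrig (s l) (τ l) (ξ i + a) - vTrig (s l) (τ l) (ξ i - a))
        - (vTrig (s l) (τ l) (ξ i + b) - vTrig (s l) (τ l) (ξ i - b)) ∧
      (vTrig (s l) (τ l) (ξ i + a) - vTrig (s l) (τ l) (ξ i - a))
        - (vTrig (s l) (τ l) (ξ i + b) - vTrig (s l) (τ l) (ξ i - b))
      ≤ (Real.tanh (s l / 2))⁻¹ * (2 * (a - b)) := by
    intro i l
    have h1 := vTrig_incr (hs l) (hτ l) (x := ξ i + b) (y := ξ i + a) (by linarith)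
    have h2 := vTrig_incr (hs l) (hτ l) (x := ξ i - a) (y := ξ i - b) (by linarith)
    constructor <;> [nlinarith [h1.1, h2.1]; nlinarith [h1.2, h2.2]]
  have keymid : ∀ l : Fin L,
      Real.tanh (s l / 2) * (2 * (a - b)) ≤
        (vTrig (s l) (τ l) (b + a) - vTrig (s l) (τ l) (b - a))
        - (vTrig (s l) (τ l) (a + b) - vTrig (s l) (τ l) (a - b)) ∧
      (vTrig (s l) (τ l) (b + a) - vTrig (s l) (τ l) (b - a))
        - (vTrig (s l) (τ l) (a + b) - vTrig (s l) (τ l) (a - b))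
      ≤ (Real.tanh (s l / 2))⁻¹ * (2 * (a - b)) := by
    intro l
    have hcomm : b + a = a + b := add_comm b a
    have h1 := vTrig_incr (hs l) (hτ l) (x := b - a) (y := a - b) (by linarith)
    rw [hcomm]
    constructor <;> [nlinarith [h1.1]; nlinarith [h1.2]]
  have keyK : ∀ k : Fin K,
      Real.tanh (r k / 2) * (a - b) ≤ vTrig (r k) (σ k) a - vTrig (r k) (σ k) b ∧
      vTrig (r k) (σ k) a - vTrig (r k) (σ k) b ≤ (Real.tanh (r k / 2))⁻¹ * (a - b) :=
    fun k => vTrig_incr (hr k) (hσ k) hle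
  have hsubK : (∑ k, (vTrig (r k) (σ k) a - vTrig (r k) (σ k) b))
      = (∑ k, vTrig (r k) (σ k) a) - ∑ k, vTrig (r k) (σ k) b := Finset.sum_sub_distrib _ _
  have hsubM : (∑ l, ((vTrig (s l) (τ l) (b + a) - vTrig (s l) (τ l) (b - a))
        - (vTrig (s l) (τ l) (a + b) - vTrig (s l) (τ l) (a - b))))
      = (∑ l, (vTrig (s l) (τ l) (b + a) - vTrig (s l) (τ l) (b - a)))
        - ∑ l, (vTrig (s l) (τ l) (a + b) - vTrig (s l) (τ l) (a - b)) := Finset.sum_sub_distrib _ _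
  have hsubE : (∑ i ∈ E, ∑ l,
        ((vTrig (s l) (τ l) (ξ i + a) - vTrig (s l) (τ l) (ξ i - a))
          - (vTrig (s l) (τ l) (ξ i + b) - vTrig (s l) (τ l) (ξ i - b))))
      = (∑ i ∈ E, ∑ l, (vTrig (s l) (τ l) (ξ i + a) - vTrig (s l) (τ l) (ξ i - a)))
        - ∑ i ∈ E, ∑ l, (vTrig (s l) (τ l) (ξ i + b) - vTrig (s l) (τ l) (ξ i - b)) := by
    rw [← Finset.sum_sub_distrib]
    exact Finset.sum_congr rfl fun i _ => Finset.sum_sub_distrib _ _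
  constructor
  · have hA : (∑ k, Real.tanh (r k / 2)) * (a - b)
        ≤ ∑ k, (vTrig (r k) (σ k) a - vTrig (r k) (σ k) b) := by
      rw [Finset.sum_mul]; exact Finset.sum_le_sum fun k _ => (keyK k).1
    have hM : (∑ l, Real.tanh (s l / 2)) * (2 * (a - b))
        ≤ ∑ l, ((vTrig (s l) (τ l) (b + a) - vTrig (s l) (τ l) (b - a))
            - (vTrig (s l) (τ l) (a + b) - vTrig (s l) (τ l) (a - b))) := by
      rw [Finset.sum_mul]; exact Finset.sum_le_sum fun l _ => (keymid l).1
    have hB : ((E.card : ℕ) : ℝ) * ((∑ l, Real.tanh (s l / 2)) * (2 * (a - b)))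
        ≤ ∑ i ∈ E, ∑ l,
            ((vTrig (s l) (τ l) (ξ i + a) - vTrig (s l) (τ l) (ξ i - a))
              - (vTrig (s l) (τ l) (ξ i + b) - vTrig (s l) (τ l) (ξ i - b))) := by
      rw [← nsmul_eq_mul, ← Finset.sum_const]
      refine Finset.sum_le_sum fun i _ => ?_
      rw [Finset.sum_mul]
      exact Finset.sum_le_sum fun l _ => (key i l).1
    rw [hcardE] at hB
    have he : ((∑ k, Real.tanh (r k / 2)) + 2 * ((n:ℝ)-1) * (∑ l, Real.tanh (s l / 2))) * (a - b)
        = (∑ k, Real.tanh (r k / 2)) * (a - b)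
          + ((∑ l, Real.tanh (s l / 2)) * (2 * (a - b))
            + ((n:ℝ) - 2) * ((∑ l, Real.tanh (s l / 2)) * (2 * (a - b)))) := by ring
    rw [hd1, hd2]
    linarith [hA, hM, hB, hsubK, hsubM, hsubE]
  · have hA : ∑ k, (vTrig (r k) (σ k) a - vTrig (r k) (σ k) b)
        ≤ (∑ k, (Real.tanh (r k / 2))⁻¹) * (a - b) := by
      rw [Finset.sum_mul]; exact Finset.sum_le_sum fun k _ => (keyK k).2
    have hM : ∑ l, ((vTrig (s l) (τ l) (b + a) - vTrig (s l) (τ l) (b - a))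
            - (vTrig (s l) (τ l) (a + b) - vTrig (s l) (τ l) (a - b)))
        ≤ (∑ l, (Real.tanh (s l / 2))⁻¹) * (2 * (a - b)) := by
      rw [Finset.sum_mul]; exact Finset.sum_le_sum fun l _ => (keymid l).2
    have hB : ∑ i ∈ E, ∑ l,
            ((vTrig (s l) (τ l) (ξ i + a) - vTrig (s l) (τ l) (ξ i - a))
              - (vTrig (s l) (τ l) (ξ i + b) - vTrig (s l) (τ l) (ξ i - b)))
        ≤ ((E.card : ℕ) : ℝ) * ((∑ l, (Real.tanh (s l / 2))⁻¹) * (2 * (a - b))) := by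
      rw [← nsmul_eq_mul, ← Finset.sum_const]
      refine Finset.sum_le_sum fun i _ => ?_
      rw [Finset.sum_mul]
      exact Finset.sum_le_sum fun l _ => (key i l).2
    rw [hcardE] at hB
    have he : ((∑ k, (Real.tanh (r k / 2))⁻¹) + 2 * ((n:ℝ)-1) * (∑ l, (Real.tanh (s l / 2))⁻¹)) * (a - b)
        = (∑ k, (Real.tanh (r k / 2))⁻¹) * (a - b)
          + ((∑ l, (Real.tanh (s l / 2))⁻¹) * (2 * (a - b))
            + ((n:ℝ) - 2) * ((∑ l, (Real.tanh (s l / 2))⁻¹) * (2 * (a - b)))) := by ring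
    rw [hd1, hd2]
    linarith [hA, hM, hB, hsubK, hsubM, hsubE]

/-- Core of the uniqueness argument. -/
lemma trigF_uniq_core (hr : ∀ k, 0 < r k) (hs : ∀ l, 0 < s l)
    (hσ : ∀ k, σ k = 1 ∨ σ k = -1) (hτ : ∀ l, τ l = 1 ∨ τ l = -1)
    (hK0 : 0 < K) (ξ η : Fin n → ℝ) (j : Fin n)
    (hd : 0 < ξ j - η j) (hmax : ∀ i, |ξ i - η i| ≤ ξ j - η j)
    (heq : trigF n K L r σ s τ ξ j = trigF n K L r σ s τ η j) : False := by
  have hmono : ∀ l : Fin L, Monotone (vTrig (s l) (τ l)) := fun l => vTrig_mono (hs l) (hτ l)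
  have hA : (∑ k, Real.tanh (r k / 2)) * (ξ j - η j)
      ≤ ∑ k, (vTrig (r k) (σ k) (ξ j) - vTrig (r k) (σ k) (η j)) := by
    rw [Finset.sum_mul]
    exact Finset.sum_le_sum fun k _ => (vTrig_incr (hr k) (hσ k) (by linarith : η j ≤ ξ j)).1
  have hApos : 0 < (∑ k, Real.tanh (r k / 2)) * (ξ j - η j) := by
    apply mul_pos _ hd
    exact Finset.sum_pos (fun k _ => tanh_half_pos (hr k))
      (Finset.univ_nonempty_iff.2 ⟨⟨0, hK0⟩⟩)
  have hB : (0:ℝ) ≤ ∑ i ∈ univ.erase j, ∑ l,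
      ((vTrig (s l) (τ l) (ξ i + ξ j) - vTrig (s l) (τ l) (ξ i - ξ j))
        - (vTrig (s l) (τ l) (η i + η j) - vTrig (s l) (τ l) (η i - η j))) := by
    refine Finset.sum_nonneg fun i _ => Finset.sum_nonneg fun l _ => ?_
    have habs := abs_le.1 (hmax i)
    have h1 : vTrig (s l) (τ l) (η i + η j) ≤ vTrig (s l) (τ l) (ξ i + ξ j) :=
      hmono l (by linarith [habs.1] : η i + η j ≤ ξ i + ξ j)
    have h2 : vTrig (s l) (τ l) (ξ i - ξ j) ≤ vTrig (s l) (τ l) (η i - η j) :=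
      hmono l (by linarith [habs.2] : ξ i - ξ j ≤ η i - η j)
    linarith
  have hsubK : (∑ k, (vTrig (r k) (σ k) (ξ j) - vTrig (r k) (σ k) (η j)))
      = (∑ k, vTrig (r k) (σ k) (ξ j)) - ∑ k, vTrig (r k) (σ k) (η j) := Finset.sum_sub_distrib _ _
  have hsubE : (∑ i ∈ univ.erase j, ∑ l,
        ((vTrig (s l) (τ l) (ξ i + ξ j) - vTrig (s l) (τ l) (ξ i - ξ j))
          - (vTrig (s l) (τ l) (η i + η j) - vTrig (s l) (τ l) (η i - η j))))
      = (∑ i ∈ univ.erase j, ∑ l, (vTrig (s l) (τ l) (ξ i + ξ j) - vTrig (s l) (τ l) (ξ i - ξ j)))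
        - ∑ i ∈ univ.erase j, ∑ l, (vTrig (s l) (τ l) (η i + η j) - vTrig (s l) (τ l) (η i - η j)) := by
    rw [← Finset.sum_sub_distrib]
    exact Finset.sum_congr rfl fun i _ => Finset.sum_sub_distrib _ _
  unfold trigF at heq
  linarith [hA, hApos, hB, hsubK, hsubE]

end system2

noncomputable def vTrigP (r σ x : ℝ) : ℝ := ∫ y in (0:ℝ)..x, vTrig r σ y

lemma hasDerivAt_vTrigP {r σ : ℝ} (hr : 0 < r) (hσ : σ = 1 ∨ σ = -1) (x : ℝ) :
    HasDerivAt (vTrigP r σ) (vTrig r σ x) x := by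
  have hc := continuous_vTrig hr hσ
  exact (intervalIntegral.integral_hasStrictDerivAt_right
    (hc.intervalIntegrable 0 x) (hc.stronglyMeasurableAtFilter _ _)
    hc.continuousAt).hasDerivAt

lemma continuous_vTrigP {r σ : ℝ} (hr : 0 < r) (hσ : σ = 1 ∨ σ = -1) :
    Continuous (vTrigP r σ) :=
  continuous_iff_continuousAt.2 fun x => (hasDerivAt_vTrigP hr hσ x).continuousAt

noncomputable def trigPhi (n K L : ℕ) (r σ : Fin K → ℝ) (s τ : Fin L → ℝ)
    (ξ : Fin n → ℝ) : ℝ :=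
  (∑ j, ∑ k, vTrigP (r k) (σ k) (ξ j))
    + (1/2) * ∑ j, ∑ i ∈ Finset.univ.erase j, ∑ l,
        (vTrigP (s l) (τ l) (ξ i + ξ j) + vTrigP (s l) (τ l) (ξ i - ξ j))
    - ∑ j, 2 * π * ((n:ℝ) - (j:Fin n).val) * ξ j

section system3

variable {n K L : ℕ} {r σ : Fin K → ℝ} {s τ : Fin L → ℝ}

lemma continuous_trigPhi (hr : ∀ k, 0 < r k) (hs : ∀ l, 0 < s l)
    (hσ : ∀ k, σ k = 1 ∨ σ k = -1) (hτ : ∀ l, τ l = 1 ∨ τ l = -1) :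
    Continuous (trigPhi n K L r σ s τ) := by
  unfold trigPhi
  apply Continuous.sub
  · apply Continuous.add
    · exact continuous_finset_sum _ fun j _ => continuous_finset_sum _ fun k _ =>
        (continuous_vTrigP (hr k) (hσ k)).comp (continuous_apply j)
    · refine continuous_const.mul ?_
      refine continuous_finset_sum _ fun j _ => continuous_finset_sum _ fun i _ =>
        continuous_finset_sum _ fun l _ => Continuous.add ?_ ?_
      · exact (continuous_vTrigP (hs l) (hτ l)).comp ((continuous_apply i).add (continuous_apply j))
      · exact (continuous_vTrigP (hs l) (hτ l)).comp ((continuous_apply i).sub (continuous_apply j))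
  · exact continuous_finset_sum _ fun j _ => continuous_const.mul (continuous_apply j)

lemma hasDerivAt_trigPhi_coord (hr : ∀ k, 0 < r k) (hs : ∀ l, 0 < s l)
    (hσ : ∀ k, σ k = 1 ∨ σ k = -1) (hτ : ∀ l, τ l = 1 ∨ τ l = -1)
    (ξ : Fin n → ℝ) (j : Fin n) (x : ℝ) :
    HasDerivAt (fun z => trigPhi n K L r σ s τ (Function.update ξ j z))
      (trigF n K L r σ s τ (Function.update ξ j x) j - 2 * π * ((n:ℝ) - j.val)) x := by
  -- Piece 1
  have h1 : HasDerivAt (fun z => ∑ j₂, ∑ k, vTrigP (r k) (σ k) (Function.update ξ j z j₂))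
      (∑ k, vTrig (r k) (σ k) x) x := by
    have := HasDerivAt.fun_sum (x := x) (u := Finset.univ)
      (A := fun j₂ z => ∑ k, vTrigP (r k) (σ k) (Function.update ξ j z j₂))
      (A' := fun j₂ => if j₂ = j then ∑ k, vTrig (r k) (σ k) x else 0) ?_
    · simpa using this
    · intro j₂ _
      by_cases h : j₂ = j
      · subst h
        simp only [if_pos rfl, Function.update_self]
        exact HasDerivAt.fun_sum fun k _ => hasDerivAt_vTrigP (hr k) (hσ k) x
      · simp only [if_neg h, Function.update_of_ne h]
        exact hasDerivAt_const x _
  -- Piece 2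
  have h2 : HasDerivAt (fun z => ∑ j₂, ∑ i ∈ Finset.univ.erase j₂, ∑ l,
        (vTrigP (s l) (τ l) (Function.update ξ j z i + Function.update ξ j z j₂)
          + vTrigP (s l) (τ l) (Function.update ξ j z i - Function.update ξ j z j₂)))
      ((∑ i ∈ Finset.univ.erase j, ∑ l,
          (vTrig (s l) (τ l) (ξ i + x) - vTrig (s l) (τ l) (ξ i - x)))
        + ∑ j₂ ∈ Finset.univ.erase j, ∑ l,
          (vTrig (s l) (τ l) (x + ξ j₂) + vTrig (s l) (τ l) (x - ξ j₂))) x := by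
    have hper : ∀ j₂ ∈ (Finset.univ : Finset (Fin n)),
        HasDerivAt (fun z => ∑ i ∈ Finset.univ.erase j₂, ∑ l,
          (vTrigP (s l) (τ l) (Function.update ξ j z i + Function.update ξ j z j₂)
            + vTrigP (s l) (τ l) (Function.update ξ j z i - Function.update ξ j z j₂)))
        (if j₂ = j then
            ∑ i ∈ Finset.univ.erase j, ∑ l,
              (vTrig (s l) (τ l) (ξ i + x) - vTrig (s l) (τ l) (ξ i - x))
          else ∑ l, (vTrig (s l) (τ l) (x + ξ j₂) + vTrig (s l) (τ l) (x - ξ j₂))) x := by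
      intro j₂ _
      by_cases h : j₂ = j
      · subst h
        rw [if_pos rfl]
        have hfun : (fun z => ∑ i ∈ Finset.univ.erase j₂, ∑ l,
              (vTrigP (s l) (τ l) (Function.update ξ j₂ z i + Function.update ξ j₂ z j₂)
                + vTrigP (s l) (τ l) (Function.update ξ j₂ z i - Function.update ξ j₂ z j₂)))
            = fun z => ∑ i ∈ Finset.univ.erase j₂, ∑ l,
              (vTrigP (s l) (τ l) (ξ i + z) + vTrigP (s l) (τ l) (ξ i - z)) := by
          funext z
          refine Finset.sum_congr rfl fun i hi => Finset.sum_congr rfl fun l _ => ?_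
          rw [Function.update_self, Function.update_of_ne (Finset.ne_of_mem_erase hi)]
        rw [hfun]
        refine HasDerivAt.fun_sum fun i _ => ?_
        refine HasDerivAt.fun_sum fun l _ => ?_
        have ha : HasDerivAt (fun z : ℝ => vTrigP (s l) (τ l) (ξ i + z))
            (vTrig (s l) (τ l) (ξ i + x)) x := by
          have := (hasDerivAt_vTrigP (hs l) (hτ l) (ξ i + x)).comp x
            ((hasDerivAt_id x).const_add (ξ i))
          simpa [Function.comp_def] using this
        have hb : HasDerivAt (fun z : ℝ => vTrigP (s l) (τ l) (ξ i - z))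
            (-vTrig (s l) (τ l) (ξ i - x)) x := by
          have := (hasDerivAt_vTrigP (hs l) (hτ l) (ξ i - x)).comp x
            ((hasDerivAt_id x).const_sub (ξ i))
          simpa [Function.comp_def] using this
        have hab := ha.add hb
        refine hab.congr_deriv ?_
        try ring
      · rw [if_neg h]
        have := HasDerivAt.fun_sum (x := x) (u := Finset.univ.erase j₂)
          (A := fun i z => ∑ l,
            (vTrigP (s l) (τ l) (Function.update ξ j z i + Function.update ξ j z j₂)
              + vTrigP (s l) (τ l) (Function.update ξ j z i - Function.update ξ j z j₂)))
          (A' := fun i => if i = j then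
              ∑ l, (vTrig (s l) (τ l) (x + ξ j₂) + vTrig (s l) (τ l) (x - ξ j₂)) else 0) ?_
        · have hjmem : j ∈ Finset.univ.erase j₂ :=
            Finset.mem_erase.2 ⟨fun hh => h hh.symm, Finset.mem_univ _⟩
          rwa [Finset.sum_ite_eq' (Finset.univ.erase j₂) j
            (fun _ => ∑ l, (vTrig (s l) (τ l) (x + ξ j₂) + vTrig (s l) (τ l) (x - ξ j₂))),
            if_pos hjmem] at this
        · intro i _
          by_cases hij : i = j
          · subst hij
            simp only [if_pos rfl, Function.update_self, Function.update_of_ne h]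
            refine HasDerivAt.fun_sum fun l _ => ?_
            have ha : HasDerivAt (fun z : ℝ => vTrigP (s l) (τ l) (z + ξ j₂))
                (vTrig (s l) (τ l) (x + ξ j₂)) x := by
              have := (hasDerivAt_vTrigP (hs l) (hτ l) (x + ξ j₂)).comp x
                ((hasDerivAt_id x).add_const (ξ j₂))
              simpa [Function.comp_def] using this
            have hb : HasDerivAt (fun z : ℝ => vTrigP (s l) (τ l) (z - ξ j₂))
                (vTrig (s l) (τ l) (x - ξ j₂)) x := by
              have := (hasDerivAt_vTrigP (hs l) (hτ l) (x - ξ j₂)).comp x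
                ((hasDerivAt_id x).sub_const (ξ j₂))
              simpa [Function.comp_def] using this
            exact ha.add hb
          · simp only [if_neg hij, Function.update_of_ne hij, Function.update_of_ne h]
            exact hasDerivAt_const x _
    have := HasDerivAt.fun_sum (x := x) (u := Finset.univ) hper
    rwa [← Finset.add_sum_erase _ _ (Finset.mem_univ j), if_pos rfl,
      Finset.sum_congr rfl (fun j₂ hj₂ => if_neg (Finset.ne_of_mem_erase hj₂))] at this
  -- Piece 3
  have h3 : HasDerivAt (fun z => ∑ j₂, 2 * π * ((n:ℝ) - (j₂ : Fin n).val) * Function.update ξ j z j₂)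
      (2 * π * ((n:ℝ) - j.val)) x := by
    have := HasDerivAt.fun_sum (x := x) (u := Finset.univ)
      (A := fun j₂ z => 2 * π * ((n:ℝ) - (j₂ : Fin n).val) * Function.update ξ j z j₂)
      (A' := fun j₂ => if j₂ = j then 2 * π * ((n:ℝ) - j.val) else 0) ?_
    · simpa using this
    · intro j₂ _
      by_cases h : j₂ = j
      · subst h
        simp only [if_pos rfl, Function.update_self, if_true]
        simpa using (hasDerivAt_id x).const_mul (2 * π * ((n:ℝ) - (j₂:Fin n).val))
      · simp only [if_neg h, Function.update_of_ne h]
        exact hasDerivAt_const x _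
  have htot := (h1.add (h2.const_mul ((1:ℝ)/2))).sub h3
  have hfeq : (fun z => trigPhi n K L r σ s τ (Function.update ξ j z))
      = fun z => (∑ j₂, ∑ k, vTrigP (r k) (σ k) (Function.update ξ j z j₂))
        + (1/2) * (∑ j₂, ∑ i ∈ Finset.univ.erase j₂, ∑ l,
            (vTrigP (s l) (τ l) (Function.update ξ j z i + Function.update ξ j z j₂)
              + vTrigP (s l) (τ l) (Function.update ξ j z i - Function.update ξ j z j₂)))
        - ∑ j₂, 2 * π * ((n:ℝ) - (j₂ : Fin n).val) * Function.update ξ j z j₂ := rfl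
  rw [hfeq]
  refine htot.congr_deriv ?_
  rw [trigF_update]
  have hSS : (∑ j₂ ∈ Finset.univ.erase j, ∑ l,
        (vTrig (s l) (τ l) (x + ξ j₂) + vTrig (s l) (τ l) (x - ξ j₂)))
      = ∑ i ∈ Finset.univ.erase j, ∑ l,
        (vTrig (s l) (τ l) (ξ i + x) - vTrig (s l) (τ l) (ξ i - x)) := by
    refine Finset.sum_congr rfl fun j₂ _ => Finset.sum_congr rfl fun l _ => ?_
    rw [add_comm x (ξ j₂), show x - ξ j₂ = -(ξ j₂ - x) by ring, vTrig_neg]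
    ring
  rw [hSS]
  ring

end system3

section system4

variable {n K L : ℕ} {r σ : Fin K → ℝ} {s τ : Fin L → ℝ}

lemma trigF_update_zero (ξ : Fin n → ℝ) (j : Fin n) :
    trigF n K L r σ s τ (Function.update ξ j 0) j = 0 := by
  rw [trigF_update]
  simp [vTrig_zero]

lemma trigF_exists (hn : 0 < n) (hK0 : 0 < K)
    (hr : ∀ k, 0 < r k) (hs : ∀ l, 0 < s l)
    (hσ : ∀ k, σ k = 1 ∨ σ k = -1) (hτ : ∀ l, τ l = 1 ∨ τ l = -1) :
    ∃ ξ : Fin n → ℝ, ∀ j : Fin n,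
      trigF n K L r σ s τ ξ j = 2 * π * ((n : ℝ) - j.val) := by
  have hπ := Real.pi_pos
  set T : ℝ := ∑ k, Real.tanh (r k / 2) with hTdef
  set S : ℝ := ∑ l, Real.tanh (s l / 2) with hSdef
  have hT : 0 < T := Finset.sum_pos (fun k _ => tanh_half_pos (hr k))
    (Finset.univ_nonempty_iff.2 ⟨⟨0, hK0⟩⟩)
  have hS : 0 ≤ S := Finset.sum_nonneg fun l _ => (tanh_half_pos (hs l)).le
  have hn1 : (1:ℝ) ≤ (n:ℝ) := by exact_mod_cast hn
  set C : ℝ := T + 2 * ((n:ℝ) - 1) * S with hCdef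
  have hC : 0 < C := by nlinarith
  set M : ℝ := (2 * π * n + 1) / C with hMdef
  have hnum : 0 < 2 * π * n + 1 := by nlinarith
  have hM0 : 0 < M := div_pos hnum hC
  have hCM : C * M = 2 * π * n + 1 := by
    rw [hMdef, mul_div_cancel₀ _ (ne_of_gt hC)]
  -- minimize trigPhi on the box
  set B : Set (Fin n → ℝ) := Set.Icc (fun _ => -M) (fun _ => M) with hBdef
  have hBne : B.Nonempty := ⟨fun _ => 0, by
    rw [hBdef, Set.mem_Icc]
    constructor <;> intro i <;> simp <;> linarith⟩
  obtain ⟨ξ₀, hξ₀B, hmin⟩ := isCompact_Icc.exists_isMinOn hBne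
    (continuous_trigPhi hr hs hσ hτ).continuousOn
  refine ⟨ξ₀, fun j => ?_⟩
  have hbox : ∀ i, -M ≤ ξ₀ i ∧ ξ₀ i ≤ M := by
    rw [Set.mem_Icc] at hξ₀B
    exact fun i => ⟨hξ₀B.1 i, hξ₀B.2 i⟩
  set g : ℝ → ℝ := fun x =>
    trigF n K L r σ s τ (Function.update ξ₀ j x) j - 2 * π * ((n:ℝ) - j.val) with hgdef
  set ψ : ℝ → ℝ := fun x => trigPhi n K L r σ s τ (Function.update ξ₀ j x) with hψdef
  have hψd : ∀ x, HasDerivAt ψ (g x) x := fun x =>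
    hasDerivAt_trigPhi_coord hr hs hσ hτ ξ₀ j x
  have hgincr : ∀ {x y : ℝ}, x ≤ y → C * (y - x) ≤ g y - g x := by
    intro x y hxy
    have h := (trigF_coord_incr hr hs hσ hτ ξ₀ j hxy).1
    rw [← hTdef, ← hSdef] at h
    simp only [hgdef]
    rw [hCdef]
    linarith [h]
  have hgmono : StrictMono g := fun x y hxy => by
    have := hgincr hxy.le
    nlinarith
  have hjn : (j.val : ℝ) < (n : ℝ) := by exact_mod_cast j.isLt
  have hgM : 0 < g M := by
    have h1 := hgincr hM0.le
    have h2 : g 0 = -(2 * π * ((n:ℝ) - j.val)) := by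
      simp only [hgdef, trigF_update_zero]; ring
    have hj0 : (0:ℝ) ≤ j.val := by positivity
    nlinarith
  have hgmM : g (-M) < 0 := by
    have h1 := hgincr (by linarith : -M ≤ 0)
    have h2 : g 0 = -(2 * π * ((n:ℝ) - j.val)) := by
      simp only [hgdef, trigF_update_zero]; ring
    nlinarith
  have hgcont : Continuous g := by
    have hfe : g = fun x => ((∑ k, vTrig (r k) (σ k) x)
        + ∑ i ∈ Finset.univ.erase j, ∑ l,
          (vTrig (s l) (τ l) (ξ₀ i + x) - vTrig (s l) (τ l) (ξ₀ i - x)))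
        - 2 * π * ((n:ℝ) - j.val) := by
      funext x
      rw [hgdef]
      simp only
      rw [trigF_update]
    rw [hfe]
    refine Continuous.sub (Continuous.add ?_ ?_) continuous_const
    · exact continuous_finset_sum _ fun k _ => continuous_vTrig (hr k) (hσ k)
    · refine continuous_finset_sum _ fun i _ => continuous_finset_sum _ fun l _ =>
        Continuous.sub ?_ ?_
      · exact (continuous_vTrig (hs l) (hτ l)).comp (continuous_const.add continuous_id)
      · exact (continuous_vTrig (hs l) (hτ l)).comp (continuous_const.sub continuous_id)
  -- IVT
  have hMM : -M ≤ M := by linarith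
  have hsub := intermediate_value_Icc hMM hgcont.continuousOn
  have h0mem : (0:ℝ) ∈ Set.Icc (g (-M)) (g M) := ⟨hgmM.le, hgM.le⟩
  obtain ⟨xs, hxsmem, hgxs⟩ := hsub h0mem
  -- the constrained minimum in coordinate j
  have hψmin : ∀ x ∈ Set.Icc (-M) M, ψ (ξ₀ j) ≤ ψ x := by
    intro x hx
    have hupd : Function.update ξ₀ j x ∈ B := by
      rw [hBdef, Set.mem_Icc]
      constructor <;> intro i <;> by_cases hij : i = j
      · subst hij; rw [Function.update_self]; exact hx.1
      · rw [Function.update_of_ne hij]; exact (hbox i).1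
      · subst hij; rw [Function.update_self]; exact hx.2
      · rw [Function.update_of_ne hij]; exact (hbox i).2
    have := hmin hupd
    simpa [hψdef, Function.update_eq_self] using this
  have hxj : ξ₀ j = xs := by
    have hxjmem : ξ₀ j ∈ Set.Icc (-M) M := ⟨(hbox j).1, (hbox j).2⟩
    rcases lt_trichotomy (ξ₀ j) xs with hlt | heq | hgt
    · exfalso
      have hanti : StrictAntiOn ψ (Set.Icc (ξ₀ j) xs) := by
        refine strictAntiOn_of_deriv_neg (convex_Icc _ _)
          (fun x _ => (hψd x).continuousAt.continuousWithinAt) ?_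
        intro x hx
        rw [interior_Icc, Set.mem_Ioo] at hx
        rw [(hψd x).deriv]
        have := hgmono hx.2
        rw [hgxs] at this
        linarith
      have := hanti (Set.left_mem_Icc.2 hlt.le) (Set.right_mem_Icc.2 hlt.le) hlt
      exact absurd (hψmin xs hxsmem) (by linarith)
    · exact heq
    · exfalso
      have hmono : StrictMonoOn ψ (Set.Icc xs (ξ₀ j)) := by
        refine strictMonoOn_of_deriv_pos (convex_Icc _ _)
          (fun x _ => (hψd x).continuousAt.continuousWithinAt) ?_
        intro x hx
        rw [interior_Icc, Set.mem_Ioo] at hx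
        rw [(hψd x).deriv]
        have := hgmono hx.1
        rw [hgxs] at this
        linarith
      have := hmono (Set.left_mem_Icc.2 hgt.le) (Set.right_mem_Icc.2 hgt.le) hgt
      exact absurd (hψmin xs hxsmem) (by linarith)
  have : g (ξ₀ j) = 0 := by rw [hxj, hgxs]
  rw [hgdef] at this
  simp only [Function.update_eq_self] at this
  linarith [this]

end system4

/-- Existence, uniqueness and two-sided bounds for the solution of the trigonometric
type B Bethe system at `α = 0`. -/
theorem trigB_exists_unique_and_bounds
    (n K L : ℕ) (hn : 1 ≤ n) (hK : 3 ≤ K) (hL : 1 ≤ L)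
    (r : Fin K → ℝ) (σ : Fin K → ℝ) (s : Fin L → ℝ) (τ : Fin L → ℝ)
    (hr : ∀ k, 0 < r k) (hs : ∀ l, 0 < s l)
    (hσ : ∀ k, σ k = 1 ∨ σ k = -1) (hτ : ∀ l, τ l = 1 ∨ τ l = -1)
    (κm κp : ℝ)
    (hκm : κm = (1 / 2) * (∑ k, (Real.tanh (r k / 2))⁻¹) +
      ((n : ℝ) - 1) * (∑ l, (Real.tanh (s l / 2))⁻¹))
    (hκp : κp = (1 / 2) * (∑ k, Real.tanh (r k / 2)) +
      ((n : ℝ) - 1) * (∑ l, Real.tanh (s l / 2))) :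
    (∃! ξ : Fin n → ℝ, trigBSys n K L r σ s τ ξ) ∧
    (∀ ξ : Fin n → ℝ, trigBSys n K L r σ s τ ξ →
      (∀ j : Fin n,
        π * ((n : ℝ) - j.val) / κm ≤ ξ j ∧ ξ j ≤ π * ((n : ℝ) - j.val) / κp) ∧
      (∀ j j' : Fin n, j < j' →
        π * ((j'.val : ℝ) - j.val) / κm ≤ ξ j - ξ j' ∧
        ξ j - ξ j' ≤ π * ((j'.val : ℝ) - j.val) / κp)) := by
  have hπ := Real.pi_pos
  have hK0 : 0 < K := by omega
  have hn0 : 0 < n := hn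
  have hn1 : (1:ℝ) ≤ (n:ℝ) := by exact_mod_cast hn
  have hsys : ∀ ξ : Fin n → ℝ, trigBSys n K L r σ s τ ξ ↔
      ∀ j : Fin n, trigF n K L r σ s τ ξ j = 2 * π * ((n:ℝ) - j.val) := fun ξ => Iff.rfl
  have hT : 0 < ∑ k, Real.tanh (r k / 2) :=
    Finset.sum_pos (fun k _ => tanh_half_pos (hr k)) (Finset.univ_nonempty_iff.2 ⟨⟨0, hK0⟩⟩)
  have hTm : 0 < ∑ k, (Real.tanh (r k / 2))⁻¹ :=
    Finset.sum_pos (fun k _ => inv_pos.2 (tanh_half_pos (hr k)))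
      (Finset.univ_nonempty_iff.2 ⟨⟨0, hK0⟩⟩)
  have hS : 0 ≤ ∑ l, Real.tanh (s l / 2) :=
    Finset.sum_nonneg fun l _ => (tanh_half_pos (hs l)).le
  have hSm : 0 ≤ ∑ l, (Real.tanh (s l / 2))⁻¹ :=
    Finset.sum_nonneg fun l _ => (inv_pos.2 (tanh_half_pos (hs l))).le
  have hκp0 : 0 < κp := by rw [hκp]; nlinarith
  have hκm0 : 0 < κm := by rw [hκm]; nlinarith
  have hCp : ∀ x : ℝ, ((∑ k, Real.tanh (r k / 2)) + 2 * ((n:ℝ)-1) * (∑ l, Real.tanh (s l / 2))) * x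
      = 2 * κp * x := by intro x; rw [hκp]; ring
  have hCm : ∀ x : ℝ, ((∑ k, (Real.tanh (r k / 2))⁻¹) + 2 * ((n:ℝ)-1) * (∑ l, (Real.tanh (s l / 2))⁻¹)) * x
      = 2 * κm * x := by intro x; rw [hκm]; ring
  have huniq : ∀ ξ η : Fin n → ℝ, trigBSys n K L r σ s τ ξ → trigBSys n K L r σ s τ η → ξ = η := by
    intro ξ η hξ hη
    by_contra hne
    obtain ⟨j, -, hmax⟩ := Finset.exists_max_image (Finset.univ : Finset (Fin n))
      (fun i => |ξ i - η i|) (Finset.univ_nonempty_iff.2 ⟨⟨0, hn0⟩⟩)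
    have habs : 0 < |ξ j - η j| := by
      obtain ⟨i, hi⟩ := Function.ne_iff.1 hne
      exact lt_of_lt_of_le (abs_pos.2 (sub_ne_zero.2 hi)) (hmax i (Finset.mem_univ i))
    have hdne : ξ j - η j ≠ 0 := fun h => by simp [h] at habs
    rcases hdne.lt_or_gt with hneg | hpos
    · refine trigF_uniq_core hr hs hσ hτ hK0 η ξ j (by linarith) ?_
        (((hsys η).1 hη j).trans (((hsys ξ).1 hξ j).symm))
      intro i
      have := hmax i (Finset.mem_univ i)
      rw [abs_sub_comm (η i) (ξ i)]
      calc |ξ i - η i| ≤ |ξ j - η j| := this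
        _ = η j - ξ j := by rw [abs_of_neg hneg]; ring
    · refine trigF_uniq_core hr hs hσ hτ hK0 ξ η j hpos ?_
        (((hsys ξ).1 hξ j).trans (((hsys η).1 hη j).symm))
      intro i
      calc |ξ i - η i| ≤ |ξ j - η j| := hmax i (Finset.mem_univ i)
        _ = ξ j - η j := abs_of_pos hpos
  constructor
  · obtain ⟨ξ₀, hξ₀⟩ := trigF_exists hn0 hK0 hr hs hσ hτ
    exact ⟨ξ₀, (hsys ξ₀).2 hξ₀, fun y hy => huniq y ξ₀ hy ((hsys ξ₀).2 hξ₀)⟩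
  · intro ξ hξ
    have hF := (hsys ξ).1 hξ
    constructor
    · intro j
      have hjn : (j.val : ℝ) < (n : ℝ) := by exact_mod_cast j.isLt
      have hRpos : 0 < 2 * π * ((n:ℝ) - j.val) := by nlinarith
      have hpos : (0:ℝ) ≤ ξ j := by
        by_contra hneg
        push_neg at hneg
        have h := (trigF_coord_incr hr hs hσ hτ ξ j (x := ξ j) (y := 0) hneg.le).1
        rw [trigF_update_zero] at h
        simp only [Function.update_eq_self] at h
        rw [hF j] at h
        rw [hCp] at h
        nlinarith [mul_pos hκp0 (neg_pos.2 hneg)]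
      have h2 := trigF_coord_incr hr hs hσ hτ ξ j (x := 0) (y := ξ j) hpos
      rw [trigF_update_zero] at h2
      simp only [Function.update_eq_self] at h2
      rw [hF j, hCp, hCm] at h2
      constructor
      · rw [div_le_iff₀ hκm0]
        linarith [h2.2]
      · rw [le_div_iff₀ hκp0]
        linarith [h2.1]
    · intro j j' hjj'
      have hne : j ≠ j' := ne_of_lt hjj'
      have hval : (j.val : ℝ) < (j'.val : ℝ) := by exact_mod_cast hjj'
      have hle : ξ j' ≤ ξ j := by
        by_contra hlt
        push_neg at hlt
        have h := (trigF_pair hr hs hσ hτ ξ hne.symm hlt.le).1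
        rw [hF j, hF j', hCp] at h
        nlinarith [mul_pos hκp0 (sub_pos.2 hlt)]
      have h := trigF_pair hr hs hσ hτ ξ hne hle
      rw [hF j, hF j', hCp, hCm] at h
      constructor
      · rw [div_le_iff₀ hκm0]
        linarith [h.2]
      · rw [le_div_iff₀ hκp0]
        linarith [h.1]
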